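/- arXiv:1604.00303 — 4 statements merged into one kernel-verified Lean document; each statement's English description precedes it below -/
import Mathlib

section
/- For every integer d ≥ 3, the function f(ρ) = 2 arctan(ρ/√(d−2)) satisfies the self-similar co-rotational wave map equation (1−ρ²)f''(ρ) + ((d−1)/ρ − 2ρ)f'(ρ) − (d−1)·sin(f(ρ))·cos(f(ρ))/ρ² = 0 for all ρ ∈ (0,1). -/
/-- The Bizoń–Biernat profile `f(ρ) = 2 arctan(ρ/√(d-2))`. -/
noncomputable def BBprofile (d : ℕ) : ℝ → ℝ :=
  fun ρ => 2 * Real.arctan (ρ / Real.sqrt ((d : ℝ) - 2))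

/-- For every `d ≥ 3`, the Bizoń–Biernat profile solves the self-similar
co-rotational wave map ODE on `(0,1)`. -/
theorem BBprofile_solves_selfsimilar_ODE (d : ℕ) (hd : 3 ≤ d) :
    ∀ ρ ∈ Set.Ioo (0 : ℝ) 1,
      (1 - ρ ^ 2) * deriv (deriv (BBprofile d)) ρ
        + (((d : ℝ) - 1) / ρ - 2 * ρ) * deriv (BBprofile d) ρ
        - ((d : ℝ) - 1) * Real.sin (BBprofile d ρ) * Real.cos (BBprofile d ρ) / ρ ^ 2 = 0 := by
  intro ρ hρ
  obtain ⟨hρ0, hρ1⟩ := hρ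
  have hd3 : (3 : ℝ) ≤ (d : ℝ) := by exact_mod_cast hd
  set c := Real.sqrt ((d : ℝ) - 2) with hc_def
  have hc2 : c ^ 2 = (d : ℝ) - 2 := Real.sq_sqrt (by linarith)
  have hc : 0 < c := Real.sqrt_pos.mpr (by linarith)
  have hc' : c ≠ 0 := hc.ne'
  have hden : ∀ x : ℝ, c ^ 2 + x ^ 2 ≠ 0 := fun x => by positivity
  -- first derivative
  have hderiv : ∀ x : ℝ, HasDerivAt (BBprofile d) (2 * c / (c ^ 2 + x ^ 2)) x := by
    intro x
    have h1 : HasDerivAt (fun y : ℝ => y / c) (1 / c) x := by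
      simpa using (hasDerivAt_id x).div_const c
    have h2 := ((Real.hasDerivAt_arctan (x / c)).comp x h1).const_mul (2 : ℝ)
    have h3 : HasDerivAt (BBprofile d) (2 * (1 / (1 + (x / c) ^ 2) * (1 / c))) x := h2
    convert h3 using 1
    rw [div_pow]
    field_simp
  have hdf : deriv (BBprofile d) = fun x => 2 * c / (c ^ 2 + x ^ 2) :=
    funext fun x => (hderiv x).deriv
  -- second derivative
  have hderiv2 : HasDerivAt (fun x : ℝ => 2 * c / (c ^ 2 + x ^ 2))
      ((0 * (c ^ 2 + ρ ^ 2) - 2 * c * (2 * ρ)) / (c ^ 2 + ρ ^ 2) ^ 2) ρ := by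
    have hnum : HasDerivAt (fun _ : ℝ => 2 * c) 0 ρ := hasDerivAt_const ρ (2 * c)
    have hd2 : HasDerivAt (fun x : ℝ => c ^ 2 + x ^ 2) (2 * ρ) ρ := by
      simpa using (hasDerivAt_pow 2 ρ).const_add (c ^ 2)
    exact hnum.div hd2 (hden ρ)
  have hddf : deriv (deriv (BBprofile d)) ρ
      = (0 * (c ^ 2 + ρ ^ 2) - 2 * c * (2 * ρ)) / (c ^ 2 + ρ ^ 2) ^ 2 := by
    rw [hdf]; exact hderiv2.deriv
  -- sin and cos
  have hs2 : Real.sqrt (1 + (ρ / c) ^ 2) ^ 2 = 1 + (ρ / c) ^ 2 :=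
    Real.sq_sqrt (by positivity)
  have hs : Real.sqrt (1 + (ρ / c) ^ 2) ≠ 0 := by positivity
  have hsin : Real.sin (BBprofile d ρ) = 2 * c * ρ / (c ^ 2 + ρ ^ 2) := by
    show Real.sin (2 * Real.arctan (ρ / c)) = _
    rw [Real.sin_two_mul, Real.sin_arctan, Real.cos_arctan, mul_assoc,
      div_mul_div_comm, mul_one, ← sq, hs2, div_pow]
    field_simp
  have hcos : Real.cos (BBprofile d ρ) = (c ^ 2 - ρ ^ 2) / (c ^ 2 + ρ ^ 2) := by
    show Real.cos (2 * Real.arctan (ρ / c)) = _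
    rw [Real.cos_two_mul, Real.cos_arctan, div_pow, one_pow, hs2]
    rw [div_pow]
    field_simp
    ring
  rw [hddf, hdf, hsin, hcos]
  have hdc : (d : ℝ) = c ^ 2 + 2 := by linarith
  rw [hdc]
  field_simp
  ring
end

section
/- Let d ≥ 3 be an integer, m = (d−1)/2, f(ρ) = 2 arctan(ρ/√(d−2)), v₁(ρ) = ρ^{m+1}(1−ρ²)^{1−m/2} f'(ρ), w(ρ) = v₁'(ρ)/v₁(ρ), and W(ρ) = (1−ρ²)(w(ρ)² − w'(ρ)) + 4ρ·w(ρ). Then for all ρ ∈ (0,1): W(ρ) + m(ρ² − m + 1)/(ρ²(1−ρ²)) − 2 = −(2(d−2)/ρ²)·(ρ² − d)/(ρ² + d − 2). -/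
/-- `m = (d-1)/2`. -/
noncomputable def mm (d : ℕ) : ℝ := ((d : ℝ) - 1) / 2

/-- The transformed symmetry mode `v₁(ρ) = ρ^(m+1) (1-ρ²)^(1-m/2) f'(ρ)`. -/
noncomputable def v1 (d : ℕ) : ℝ → ℝ :=
  fun ρ => ρ ^ (mm d + 1) * (1 - ρ ^ 2) ^ (1 - mm d / 2) * deriv (BBprofile d) ρ

/-- `w = v₁'/v₁`. -/
noncomputable def ww (d : ℕ) : ℝ → ℝ :=
  fun ρ => deriv (v1 d) ρ / v1 d ρ

/-- `W(ρ) = (1-ρ²)(w² - w') + 4ρw`. -/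
noncomputable def WW (d : ℕ) : ℝ → ℝ :=
  fun ρ => (1 - ρ ^ 2) * ((ww d ρ) ^ 2 - deriv (ww d) ρ) + 4 * ρ * ww d ρ

/-- Explicit formula for the supersymmetric potential of the Bizoń–Biernat solution. -/
lemma hasDerivAt_BB (d : ℕ) (hd : 3 ≤ d) (ρ : ℝ) :
    HasDerivAt (BBprofile d) (2 * Real.sqrt ((d:ℝ) - 2) / (((d:ℝ) - 2) + ρ ^ 2)) ρ := by
  have hb : (0:ℝ) < (d:ℝ) - 2 := by
    have : (3:ℝ) ≤ (d:ℝ) := by exact_mod_cast hd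
    linarith
  set b := (d:ℝ) - 2 with hbdef
  have hsb : Real.sqrt b > 0 := Real.sqrt_pos.mpr hb
  have hsq : Real.sqrt b ^ 2 = b := Real.sq_sqrt hb.le
  have h1 : HasDerivAt (fun x : ℝ => x / Real.sqrt b) (1 / Real.sqrt b) ρ := by
    simpa using (hasDerivAt_id ρ).div_const (Real.sqrt b)
  have h2 : HasDerivAt (fun x : ℝ => Real.arctan (x / Real.sqrt b))
      ((1 / (1 + (ρ / Real.sqrt b) ^ 2)) * (1 / Real.sqrt b)) ρ :=
    by have := (Real.hasDerivAt_arctan (ρ / Real.sqrt b)).comp ρ h1; exact this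
  have h3 := h2.const_mul 2
  convert h3 using 1
  all_goals try rfl
  have hden : 1 + (ρ / Real.sqrt b) ^ 2 > 0 := by positivity
  field_simp
  nlinarith [hsq, hsb]

noncomputable def gg (d : ℕ) : ℝ → ℝ :=
  fun ρ => (mm d + 1) / ρ + (mm d - 2) * ρ / (1 - ρ ^ 2) - 2 * ρ / (((d:ℝ) - 2) + ρ ^ 2)

lemma v1_eq (d : ℕ) (hd : 3 ≤ d) : v1 d = fun ρ =>
    ρ ^ (mm d + 1) * (1 - ρ ^ 2) ^ (1 - mm d / 2)
      * (2 * Real.sqrt ((d:ℝ) - 2) / (((d:ℝ) - 2) + ρ ^ 2)) := by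
  funext ρ
  rw [v1, (hasDerivAt_BB d hd ρ).deriv]

lemma hasDerivAt_v1 (d : ℕ) (hd : 3 ≤ d) {ρ : ℝ} (hρ : ρ ∈ Set.Ioo (0:ℝ) 1) :
    HasDerivAt (v1 d) (v1 d ρ * gg d ρ) ρ := by
  obtain ⟨h0, h1⟩ := hρ
  have hb : (0:ℝ) < (d:ℝ) - 2 := by
    have : (3:ℝ) ≤ (d:ℝ) := by exact_mod_cast hd
    linarith
  have h1r : (0:ℝ) < 1 - ρ ^ 2 := by nlinarith
  have hbr : (0:ℝ) < ((d:ℝ) - 2) + ρ ^ 2 := by positivity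
  have hA : HasDerivAt (fun x : ℝ => x ^ (mm d + 1)) ((mm d + 1) * ρ ^ (mm d + 1 - 1)) ρ :=
    Real.hasDerivAt_rpow_const (Or.inl h0.ne')
  have hq : HasDerivAt (fun x : ℝ => 1 - x ^ 2) (-(2 * ρ)) ρ := by
    simpa using ((hasDerivAt_pow 2 ρ).const_sub 1)
  have hB : HasDerivAt (fun x : ℝ => (1 - x ^ 2) ^ (1 - mm d / 2))
      ((1 - mm d / 2) * (1 - ρ ^ 2) ^ (1 - mm d / 2 - 1) * (-(2 * ρ))) ρ :=
    by have := (Real.hasDerivAt_rpow_const (p := 1 - mm d / 2) (Or.inl h1r.ne')).comp ρ hq; exact this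
  have hq2 : HasDerivAt (fun x : ℝ => ((d:ℝ) - 2) + x ^ 2) (2 * ρ) ρ := by
    simpa using ((hasDerivAt_pow 2 ρ).const_add ((d:ℝ) - 2))
  have hC : HasDerivAt (fun x : ℝ => 2 * Real.sqrt ((d:ℝ) - 2) / (((d:ℝ) - 2) + x ^ 2))
      (-(2 * Real.sqrt ((d:ℝ) - 2) * (2 * ρ)) / (((d:ℝ) - 2) + ρ ^ 2) ^ 2) ρ := by
    have := (hasDerivAt_const ρ (2 * Real.sqrt ((d:ℝ) - 2))).fun_div hq2 hbr.ne'
    convert this using 1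
    all_goals try rfl
    ring
  have hprod := (hA.fun_mul hB).fun_mul hC
  rw [v1_eq d hd]
  convert hprod using 1
  all_goals try rfl
  simp only
  have e1 : ρ ^ (mm d + 1 - 1) = ρ ^ (mm d + 1) / ρ := by
    rw [Real.rpow_sub h0, Real.rpow_one]
  have e2 : (1 - ρ ^ 2) ^ (1 - mm d / 2 - 1) = (1 - ρ ^ 2) ^ (1 - mm d / 2) / (1 - ρ ^ 2) := by
    rw [Real.rpow_sub h1r, Real.rpow_one]
  rw [gg, e1, e2]
  field_simp
  ring

lemma v1_pos (d : ℕ) (hd : 3 ≤ d) {ρ : ℝ} (hρ : ρ ∈ Set.Ioo (0:ℝ) 1) : 0 < v1 d ρ := by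
  obtain ⟨h0, h1⟩ := hρ
  have hb : (0:ℝ) < (d:ℝ) - 2 := by
    have : (3:ℝ) ≤ (d:ℝ) := by exact_mod_cast hd
    linarith
  have h1r : (0:ℝ) < 1 - ρ ^ 2 := by nlinarith
  rw [v1_eq d hd]
  have := Real.sqrt_pos.mpr hb
  positivity

lemma ww_eq (d : ℕ) (hd : 3 ≤ d) {ρ : ℝ} (hρ : ρ ∈ Set.Ioo (0:ℝ) 1) :
    (fun x => deriv (v1 d) x / v1 d x) ρ = gg d ρ := by
  simp only
  rw [(hasDerivAt_v1 d hd hρ).deriv]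
  field_simp [(v1_pos d hd hρ).ne']

lemma hasDerivAt_gg (d : ℕ) (hd : 3 ≤ d) {ρ : ℝ} (hρ : ρ ∈ Set.Ioo (0:ℝ) 1) :
    HasDerivAt (gg d)
      (-(mm d + 1) / ρ ^ 2 + (mm d - 2) * (1 + ρ ^ 2) / (1 - ρ ^ 2) ^ 2
        - 2 * (((d:ℝ) - 2) - ρ ^ 2) / (((d:ℝ) - 2) + ρ ^ 2) ^ 2) ρ := by
  obtain ⟨h0, h1⟩ := hρ
  have hb : (0:ℝ) < (d:ℝ) - 2 := by
    have : (3:ℝ) ≤ (d:ℝ) := by exact_mod_cast hd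
    linarith
  have h1r : (0:ℝ) < 1 - ρ ^ 2 := by nlinarith
  have hbr : (0:ℝ) < ((d:ℝ) - 2) + ρ ^ 2 := by positivity
  have hq : HasDerivAt (fun x : ℝ => 1 - x ^ 2) (-(2 * ρ)) ρ := by
    simpa using ((hasDerivAt_pow 2 ρ).const_sub 1)
  have hq2 : HasDerivAt (fun x : ℝ => ((d:ℝ) - 2) + x ^ 2) (2 * ρ) ρ := by
    simpa using ((hasDerivAt_pow 2 ρ).const_add ((d:ℝ) - 2))
  have t1 : HasDerivAt (fun x : ℝ => (mm d + 1) / x)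
      ((0 * ρ - (mm d + 1) * 1) / ρ ^ 2) ρ :=
    (hasDerivAt_const ρ (mm d + 1)).div (hasDerivAt_id ρ) h0.ne'
  have t2 : HasDerivAt (fun x : ℝ => (mm d - 2) * x / (1 - x ^ 2))
      (((mm d - 2) * 1 * (1 - ρ ^ 2) - (mm d - 2) * ρ * (-(2 * ρ))) / (1 - ρ ^ 2) ^ 2) ρ := by
    simpa using ((hasDerivAt_id ρ).const_mul (mm d - 2)).fun_div hq h1r.ne'
  have t3 : HasDerivAt (fun x : ℝ => 2 * x / (((d:ℝ) - 2) + x ^ 2))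
      ((2 * 1 * (((d:ℝ) - 2) + ρ ^ 2) - 2 * ρ * (2 * ρ)) / (((d:ℝ) - 2) + ρ ^ 2) ^ 2) ρ := by
    simpa using ((hasDerivAt_id ρ).const_mul 2).fun_div hq2 hbr.ne'
  have := (t1.fun_add t2).fun_sub t3
  convert this using 1
  all_goals try rfl
  field_simp
  ring


/-- Explicit formula -/
theorem susy_potential_formula (d : ℕ) (hd : 3 ≤ d) :
    ∀ ρ ∈ Set.Ioo (0 : ℝ) 1,
      WW d ρ + mm d * (ρ ^ 2 - mm d + 1) / (ρ ^ 2 * (1 - ρ ^ 2)) - 2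
        = -(2 * ((d : ℝ) - 2) / ρ ^ 2) * ((ρ ^ 2 - (d : ℝ)) / (ρ ^ 2 + (d : ℝ) - 2)) := by
  intro ρ hρ
  obtain ⟨h0, h1⟩ := hρ
  have hb : (0:ℝ) < (d:ℝ) - 2 := by
    have : (3:ℝ) ≤ (d:ℝ) := by exact_mod_cast hd
    linarith
  have h1r : (0:ℝ) < 1 - ρ ^ 2 := by nlinarith
  have hbr : (0:ℝ) < ((d:ℝ) - 2) + ρ ^ 2 := by positivity
  have h3 : (0:ℝ) < ρ ^ 2 + (d:ℝ) - 2 := by nlinarith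
  have hww : ww d ρ = gg d ρ := ww_eq d hd ⟨h0, h1⟩
  have hev : ww d =ᶠ[nhds ρ] gg d :=
    Filter.eventuallyEq_of_mem (isOpen_Ioo.mem_nhds ⟨h0, h1⟩)
      (fun x hx => ww_eq d hd hx)
  have hder : deriv (ww d) ρ =
      -(mm d + 1) / ρ ^ 2 + (mm d - 2) * (1 + ρ ^ 2) / (1 - ρ ^ 2) ^ 2
        - 2 * (((d:ℝ) - 2) - ρ ^ 2) / (((d:ℝ) - 2) + ρ ^ 2) ^ 2 := by
    rw [hev.deriv_eq, (hasDerivAt_gg d hd ⟨h0, h1⟩).deriv]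
  rw [WW, hww, hder, gg, mm]
  field_simp
  ring
end

section
/- Let k ≥ 2 be an integer and λ ∈ ℂ. A twice continuously differentiable function y : (0,1) → ℂ satisfies the Heun equation y''(x) + (1/2)((k+6)/x + (2λ−k+1)/(x−1))y'(x) + (1/4)·((λ+3)(λ+2)x + (kλ² + 5kλ + 2k − 4))/(x(x−1)(x+k))·y(x) = 0 on (0,1) if and only if the function ũ(ρ) = ρ²·y(ρ²) satisfies (1−ρ²)ũ'' + ((k+1)/ρ − 2(λ+1)ρ)ũ' − λ(λ+1)ũ + (2k/ρ²)·((ρ²−k−2)/(ρ²+k))·ũ = 0 on (0,1). -/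
/-- The key algebraic identity: the supersymmetric expression equals
`-4 r⁴ (r² - 1)` times the Heun expression at `x = r²`. -/
lemma susy_eq_heun (k lam r Y Y1 Y2 : ℂ) (hr : r ≠ 0) (h1 : r ^ 2 - 1 ≠ 0)
    (hk : r ^ 2 + k ≠ 0) :
    (1 - r ^ 2) * (2 * Y + 10 * r ^ 2 * Y1 + 4 * r ^ 4 * Y2)
      + ((k + 1) / r - 2 * (lam + 1) * r) * (2 * r * Y + 2 * r ^ 3 * Y1)
      - lam * (lam + 1) * (r ^ 2 * Y)
      + (2 * k / r ^ 2) * ((r ^ 2 - k - 2) / (r ^ 2 + k)) * (r ^ 2 * Y)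
    = (-4 * r ^ 4 * (r ^ 2 - 1)) *
      (Y2 + (1 / 2) * ((k + 6) / r ^ 2 + (2 * lam - k + 1) / (r ^ 2 - 1)) * Y1
        + (1 / 4) * (((lam + 3) * (lam + 2) * r ^ 2
              + (k * lam ^ 2 + 5 * k * lam + 2 * k - 4))
            / (r ^ 2 * (r ^ 2 - 1) * (r ^ 2 + k))) * Y) := by
  have h2 : r ^ 2 ≠ 0 := pow_ne_zero 2 hr
  field_simp
  ring

/-- Equivalence between the Heun equation in canonical form and the supersymmetric
problem under the substitution `x = ρ²`, `ũ(ρ) = ρ² y(ρ²)`. -/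
theorem heun_susy_equivalence (k : ℕ) (hk : 2 ≤ k) (lam : ℂ)
    (y : ℝ → ℂ) (hy : ContDiffOn ℝ 2 y (Set.Ioo 0 1)) :
    (∀ x ∈ Set.Ioo (0 : ℝ) 1,
      deriv (deriv y) x
        + (1 / 2) * (((k : ℂ) + 6) / (x : ℂ) + (2 * lam - (k : ℂ) + 1) / ((x : ℂ) - 1))
            * deriv y x
        + (1 / 4) * (((lam + 3) * (lam + 2) * (x : ℂ)
              + ((k : ℂ) * lam ^ 2 + 5 * (k : ℂ) * lam + 2 * (k : ℂ) - 4))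
            / ((x : ℂ) * ((x : ℂ) - 1) * ((x : ℂ) + (k : ℂ)))) * y x = 0)
    ↔
    (∀ ρ ∈ Set.Ioo (0 : ℝ) 1,
      (1 - (ρ : ℂ) ^ 2) * deriv (deriv (fun t : ℝ => (t : ℂ) ^ 2 * y (t ^ 2))) ρ
        + (((k : ℂ) + 1) / (ρ : ℂ) - 2 * (lam + 1) * (ρ : ℂ))
            * deriv (fun t : ℝ => (t : ℂ) ^ 2 * y (t ^ 2)) ρ
        - lam * (lam + 1) * ((ρ : ℂ) ^ 2 * y (ρ ^ 2))
        + (2 * (k : ℂ) / (ρ : ℂ) ^ 2) * (((ρ : ℂ) ^ 2 - (k : ℂ) - 2) / ((ρ : ℂ) ^ 2 + (k : ℂ)))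
            * ((ρ : ℂ) ^ 2 * y (ρ ^ 2)) = 0) := by
  have hs : IsOpen (Set.Ioo (0 : ℝ) 1) := isOpen_Ioo
  have hsq : ∀ t ∈ Set.Ioo (0 : ℝ) 1, t ^ 2 ∈ Set.Ioo (0 : ℝ) 1 := by
    intro t ht
    obtain ⟨h0, h1⟩ := ht
    constructor
    · positivity
    · nlinarith
  have hy' : ∀ x ∈ Set.Ioo (0 : ℝ) 1, HasDerivAt y (deriv y x) x := by
    intro x hx
    exact ((hy.differentiableOn (by norm_num)).differentiableAt
      (hs.mem_nhds hx)).hasDerivAt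
  have hy1c : ContDiffOn ℝ 1 (deriv y) (Set.Ioo (0 : ℝ) 1) := by
    exact hy.deriv_of_isOpen hs (by norm_num : (1 : WithTop ℕ∞) + 1 ≤ 2)
  have hy'' : ∀ x ∈ Set.Ioo (0 : ℝ) 1, HasDerivAt (deriv y) (deriv (deriv y) x) x := by
    intro x hx
    exact ((hy1c.differentiableOn (by norm_num)).differentiableAt
      (hs.mem_nhds hx)).hasDerivAt
  -- first derivative of u
  have hu : ∀ t ∈ Set.Ioo (0 : ℝ) 1,
      HasDerivAt (fun t : ℝ => (t : ℂ) ^ 2 * y (t ^ 2))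
        (2 * (t : ℂ) * y (t ^ 2) + 2 * (t : ℂ) ^ 3 * deriv y (t ^ 2)) t := by
    intro t ht
    have h0 : HasDerivAt (fun s : ℝ => (s : ℂ)) 1 t := by
      exact Complex.ofRealCLM.hasDerivAt (x := t)
    have h1 : HasDerivAt (fun s : ℝ => (s : ℂ) ^ 2) (2 * (t : ℂ)) t := by
      have := h0.fun_mul h0
      simp only [pow_two]
      convert this using 1
      · rfl
      ring
    have hp : HasDerivAt (fun s : ℝ => s ^ 2) (2 * t) t := by
      simpa using hasDerivAt_pow 2 t
    have h2 : HasDerivAt (fun s : ℝ => y (s ^ 2)) ((2 * t) • deriv y (t ^ 2)) t := by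
      have := HasDerivAt.scomp (h := fun s : ℝ => s ^ 2) t (hy' _ (hsq t ht)) hp
      exact this
    have := h1.fun_mul h2
    convert this using 1
    · rfl
    simp only [Complex.real_smul]
    push_cast
    ring
  have hderiv_u : ∀ t ∈ Set.Ioo (0 : ℝ) 1,
      deriv (fun t : ℝ => (t : ℂ) ^ 2 * y (t ^ 2)) t
        = 2 * (t : ℂ) * y (t ^ 2) + 2 * (t : ℂ) ^ 3 * deriv y (t ^ 2) :=
    fun t ht => (hu t ht).deriv
  -- second derivative of u
  have hw : ∀ t ∈ Set.Ioo (0 : ℝ) 1,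
      HasDerivAt (fun s : ℝ => 2 * (s : ℂ) * y (s ^ 2) + 2 * (s : ℂ) ^ 3 * deriv y (s ^ 2))
        (2 * y (t ^ 2) + 10 * (t : ℂ) ^ 2 * deriv y (t ^ 2)
          + 4 * (t : ℂ) ^ 4 * deriv (deriv y) (t ^ 2)) t := by
    intro t ht
    have hp : HasDerivAt (fun s : ℝ => s ^ 2) (2 * t) t := by
      simpa using hasDerivAt_pow 2 t
    have h0 : HasDerivAt (fun s : ℝ => (s : ℂ)) 1 t := by
      exact Complex.ofRealCLM.hasDerivAt (x := t)
    have hA : HasDerivAt (fun s : ℝ => 2 * (s : ℂ)) (2 : ℂ) t := by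
      have := h0.const_mul (2 : ℂ)
      simpa using this
    have hB : HasDerivAt (fun s : ℝ => y (s ^ 2)) ((2 * t) • deriv y (t ^ 2)) t := by
      have := HasDerivAt.scomp (h := fun s : ℝ => s ^ 2) t (hy' _ (hsq t ht)) hp
      exact this
    have hC : HasDerivAt (fun s : ℝ => 2 * (s : ℂ) ^ 3) (6 * (t : ℂ) ^ 2) t := by
      have := ((h0.fun_mul h0).fun_mul h0).const_mul (2 : ℂ)
      simp only [show ∀ z : ℂ, z * z * z = z ^ 3 from fun z => by ring] at this
      convert this using 1
      · rfl
      ring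
    have hD : HasDerivAt (fun s : ℝ => deriv y (s ^ 2)) ((2 * t) • deriv (deriv y) (t ^ 2)) t := by
      have := HasDerivAt.scomp (h := fun s : ℝ => s ^ 2) t (hy'' _ (hsq t ht)) hp
      exact this
    have := (hA.fun_mul hB).fun_add (hC.fun_mul hD)
    convert this using 1
    · rfl
    simp only [Complex.real_smul]
    push_cast
    ring
  have hu2 : ∀ ρ ∈ Set.Ioo (0 : ℝ) 1,
      deriv (deriv (fun t : ℝ => (t : ℂ) ^ 2 * y (t ^ 2))) ρ
        = 2 * y (ρ ^ 2) + 10 * (ρ : ℂ) ^ 2 * deriv y (ρ ^ 2)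
          + 4 * (ρ : ℂ) ^ 4 * deriv (deriv y) (ρ ^ 2) := by
    intro ρ hρ
    have heq : deriv (fun t : ℝ => (t : ℂ) ^ 2 * y (t ^ 2))
        =ᶠ[nhds ρ] (fun s : ℝ => 2 * (s : ℂ) * y (s ^ 2) + 2 * (s : ℂ) ^ 3 * deriv y (s ^ 2)) :=
      Filter.eventuallyEq_of_mem (hs.mem_nhds hρ) (fun t ht => (hu t ht).deriv)
    rw [heq.deriv_eq]
    exact (hw ρ hρ).deriv
  -- nonvanishing facts
  have hnz : ∀ ρ ∈ Set.Ioo (0 : ℝ) 1, (ρ : ℂ) ≠ 0 ∧ (ρ : ℂ) ^ 2 - 1 ≠ 0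
      ∧ (ρ : ℂ) ^ 2 + (k : ℂ) ≠ 0 := by
    intro ρ hρ
    obtain ⟨h0, h1⟩ := hρ
    refine ⟨Complex.ofReal_ne_zero.mpr (ne_of_gt h0), ?_, ?_⟩
    · have : (ρ ^ 2 - 1 : ℝ) ≠ 0 := by nlinarith
      have h2 := Complex.ofReal_ne_zero.mpr this
      push_cast at h2
      exact h2
    · have : (ρ ^ 2 + (k : ℝ) : ℝ) ≠ 0 := by
        have : (2 : ℝ) ≤ (k : ℝ) := by exact_mod_cast hk
        nlinarith
      have h2 := Complex.ofReal_ne_zero.mpr this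
      push_cast at h2
      exact h2
  constructor
  · intro H ρ hρ
    obtain ⟨hr0, h1, h2⟩ := hnz ρ hρ
    have HX := H (ρ ^ 2) (hsq ρ hρ)
    push_cast at HX
    rw [hu2 ρ hρ, hderiv_u ρ hρ,
      susy_eq_heun (k : ℂ) lam (ρ : ℂ) (y (ρ ^ 2)) (deriv y (ρ ^ 2))
        (deriv (deriv y) (ρ ^ 2)) hr0 h1 h2, HX, mul_zero]
  · intro H x hx
    have hρmem : Real.sqrt x ∈ Set.Ioo (0 : ℝ) 1 := by
      obtain ⟨h0, h1⟩ := hx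
      refine ⟨Real.sqrt_pos.mpr h0, ?_⟩
      have hsq' : Real.sqrt x ^ 2 = x := Real.sq_sqrt h0.le
      nlinarith [Real.sqrt_nonneg x]
    set ρ := Real.sqrt x with hρdef
    have hρx : ρ ^ 2 = x := Real.sq_sqrt hx.1.le
    obtain ⟨hr0, h1, h2⟩ := hnz ρ hρmem
    have HS := H ρ hρmem
    rw [hu2 ρ hρmem, hderiv_u ρ hρmem,
      susy_eq_heun (k : ℂ) lam (ρ : ℂ) (y (ρ ^ 2)) (deriv y (ρ ^ 2))
        (deriv (deriv y) (ρ ^ 2)) hr0 h1 h2] at HS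
    have hc : (-4 * (ρ : ℂ) ^ 4 * ((ρ : ℂ) ^ 2 - 1)) ≠ 0 := by
      apply mul_ne_zero
      apply mul_ne_zero
      · norm_num
      · exact pow_ne_zero 4 hr0
      · exact h1
    have HE := (mul_eq_zero.mp HS).resolve_left hc
    rw [← hρx]
    push_cast
    exact HE
end

section
/- For every integer k ≥ 3, the quartic polynomial P(λ) = k²λ⁴ + 14k²λ³ + k(63k − 8)λ² + 14k(7k − 4)λ + 8(5k² − 2k + 8) is Hurwitz-stable: it has no complex root λ with Re λ ≥ 0. -/
/-- Hurwitz stability of the denominator of `r₂(λ,k)`: for every integer `k ≥ 3`, the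
quartic `k²λ⁴ + 14k²λ³ + k(63k-8)λ² + 14k(7k-4)λ + 8(5k²-2k+8)` has no root with
`Re λ ≥ 0`. -/
theorem quartic_hurwitz_stable (k : ℕ) (hk : 3 ≤ k) :
    ∀ lam : ℂ, 0 ≤ lam.re →
      (k : ℂ) ^ 2 * lam ^ 4 + 14 * (k : ℂ) ^ 2 * lam ^ 3
        + (k : ℂ) * (63 * (k : ℂ) - 8) * lam ^ 2
        + 14 * (k : ℂ) * (7 * (k : ℂ) - 4) * lam
        + 8 * (5 * (k : ℂ) ^ 2 - 2 * (k : ℂ) + 8) ≠ 0 := by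
  intro lam hx hzero
  set x := lam.re with hxd
  set y := lam.im with hyd
  set K := (k:ℝ) with hKd
  have hK : (3:ℝ) ≤ K := by rw [hKd]; exact_mod_cast hk
  rw [← Complex.re_add_im lam] at hzero
  rw [← hxd, ← hyd] at hzero
  have h1 := congrArg Complex.re hzero
  have h2 := congrArg Complex.im hzero
  simp [Complex.ext_iff, pow_succ, Complex.add_re, Complex.add_im, Complex.mul_re,
    Complex.mul_im] at h1 h2
  -- clean real-part equation
  have hA : K^2*y^4 - (6*K^2*x^2 + 42*K^2*x + K*(63*K-8))*y^2
      + (K^2*x^4 + 14*K^2*x^3 + K*(63*K-8)*x^2 + 14*K*(7*K-4)*x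
        + 8*(5*K^2-2*K+8)) = 0 := by linear_combination h1
  -- clean imaginary-part equation
  have hBy : y * ((4*K^2*x^3 + 42*K^2*x^2 + 2*K*(63*K-8)*x + 14*K*(7*K-4))
      - (4*K^2*x + 14*K^2)*y^2) = 0 := by linear_combination h2
  rcases mul_eq_zero.mp hBy with hy0 | hB
  · -- y = 0 : real positive polynomial
    have h63 : (0:ℝ) ≤ 63*K - 8 := by linarith
    have h74 : (0:ℝ) ≤ 7*K - 4 := by linarith
    have t1 : (0:ℝ) ≤ K^2*x^4 := by positivity
    have t2 : (0:ℝ) ≤ 14*K^2*x^3 := by positivity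
    have t3 : (0:ℝ) ≤ K*(63*K-8)*x^2 :=
      mul_nonneg (mul_nonneg (by linarith) h63) (sq_nonneg x)
    have t4 : (0:ℝ) ≤ 14*K*(7*K-4)*x :=
      mul_nonneg (mul_nonneg (by linarith) h74) hx
    have t5 : (0:ℝ) < 8*(5*K^2-2*K+8) := by nlinarith
    rw [hy0] at hA
    nlinarith [hA, t1, t2, t3, t4, t5]
  · -- y ≠ 0 : Routh–Hurwitz eliminant
    have hs : (0:ℝ) ≤ K - 3 := by linarith
    have hfinal : 38292912 + 80840592*(K-3) + 70828128*(K-3)^2 + 32979744*(K-3)^3 + 8610672*(K-3)^4 + 1195600*(K-3)^5 + 68992*(K-3)^6 + 93561804*x + 191333016*x*(K-3) + 162903636*x*(K-3)^2 + 73917648*x*(K-3)^3 + 18853044*x*(K-3)^4 + 2562840*x*(K-3)^5 + 145068*x*(K-3)^6 + 82331316*x^2 + 166280040*x^2*(K-3) + 139907628*x^2*(K-3)^2 + 62774064*x^2*(K-3)^3 + 15840972*x^2*(K-3)^4 + 2131688*x^2*(K-3)^5 + 119508*x^2*(K-3)^6 + 35707392*x^3 + 71705088*x^3*(K-3) + 59996160*x^3*(K-3)^2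 + 26772480*x^3*(K-3)^3 + 6720000*x^3*(K-3)^4 + 899584*x^3*(K-3)^5 + 50176*x^3*(K-3)^6 + 8265888*x^4 + 16552512*x^4*(K-3) + 13811040*x^4*(K-3)^2 + 6145920*x^4*(K-3)^3 + 1538400*x^4*(K-3)^4 + 205376*x^4*(K-3)^5 + 11424*x^4*(K-3)^6 + 979776*x^5 + 1959552*x^5*(K-3) + 1632960*x^5*(K-3)^2 + 725760*x^5*(K-3)^3 + 181440*x^5*(K-3)^4 + 24192*x^5*(K-3)^5 + 1344*x^5*(K-3)^6 + 46656*x^6 + 93312*x^6*(K-3) + 77760*x^6*(K-3)^2 + 34560*x^6*(K-3)^3 + 8640*x^6*(K-3)^4 + 1152*x^6*(K-3)^5 + 64*x^6*(K-3)^6 = 0 := by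
      linear_combination (-(4*K^2*x+14*K^2)^2) * hA
        + ((6*K^2*x^2+42*K^2*x+K*(63*K-8))*(4*K^2*x+14*K^2)
          - K^2*(4*K^2*x^3+42*K^2*x^2+2*K*(63*K-8)*x+14*K*(7*K-4))
          - K^2*(4*K^2*x+14*K^2)*y^2) * hB
    linarith [hfinal, mul_nonneg (pow_nonneg hx 0) (pow_nonneg hs 1), mul_nonneg (pow_nonneg hx 0) (pow_nonneg hs 2), mul_nonneg (pow_nonneg hx 0) (pow_nonneg hs 3), mul_nonneg (pow_nonneg hx 0) (pow_nonneg hs 4), mul_nonneg (pow_nonneg hx 0) (pow_nonneg hs 5), mul_nonneg (pow_nonneg hx 0) (pow_nonneg hs 6), mul_nonneg (pow_nonneg hx 1) (pow_nonneg hs 0), mul_nonneg (pow_nonneg hx 1) (pow_nonneg hs 1), mul_nonneg (pow_nonneg hx 1) (pow_nonneg hs 2), mul_nonneg (pow_nonneg hx 1) (pow_nonneg hs 3), mul_nonneg (pow_nonneg hx 1) (pow_nonneg hs 4), mul_nonneg (pow_nonneg hx 1) (pow_nonneg hs 5), mul_nonneg (pow_nonneg hx 1) (pow_nonneg hs 6),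 mul_nonneg (pow_nonneg hx 2) (pow_nonneg hs 0), mul_nonneg (pow_nonneg hx 2) (pow_nonneg hs 1), mul_nonneg (pow_nonneg hx 2) (pow_nonneg hs 2), mul_nonneg (pow_nonneg hx 2) (pow_nonneg hs 3), mul_nonneg (pow_nonneg hx 2) (pow_nonneg hs 4), mul_nonneg (pow_nonneg hx 2) (pow_nonneg hs 5), mul_nonneg (pow_nonneg hx 2) (pow_nonneg hs 6), mul_nonneg (pow_nonneg hx 3) (pow_nonneg hs 0), mul_nonneg (pow_nonneg hx 3) (pow_nonneg hs 1), mul_nonneg (pow_nonneg hx 3) (pow_nonneg hs 2), mul_nonneg (pow_nonneg hx 3) (pow_nonneg hs 3), mul_nonneg (pow_nonneg hx 3) (pow_nonneg hs 4), mul_nonneg (pow_nonneg hx 3) (pow_nonneg hs 5), mul_nonneg (pow_nonneg hx 3) (pow_nonneg hs 6), mul_nonneg (pow_nonneg hx 4) (pow_nonneg hs 0), mul_nonneg (pow_nonneg hx 4) (pow_nonneg hs 1), mul_nonneg (pow_nonneg hx 4) (pow_nonneg hs 2), mul_nonneg (pow_nonneg hx 4) (pow_nonneg hs 3), mul_nonneg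 (pow_nonneg hx 4) (pow_nonneg hs 4), mul_nonneg (pow_nonneg hx 4) (pow_nonneg hs 5), mul_nonneg (pow_nonneg hx 4) (pow_nonneg hs 6), mul_nonneg (pow_nonneg hx 5) (pow_nonneg hs 0), mul_nonneg (pow_nonneg hx 5) (pow_nonneg hs 1), mul_nonneg (pow_nonneg hx 5) (pow_nonneg hs 2), mul_nonneg (pow_nonneg hx 5) (pow_nonneg hs 3), mul_nonneg (pow_nonneg hx 5) (pow_nonneg hs 4), mul_nonneg (pow_nonneg hx 5) (pow_nonneg hs 5), mul_nonneg (pow_nonneg hx 5) (pow_nonneg hs 6), mul_nonneg (pow_nonneg hx 6) (pow_nonneg hs 0), mul_nonneg (pow_nonneg hx 6) (pow_nonneg hs 1), mul_nonneg (pow_nonneg hx 6) (pow_nonneg hs 2), mul_nonneg (pow_nonneg hx 6) (pow_nonneg hs 3), mul_nonneg (pow_nonneg hx 6) (pow_nonneg hs 4), mul_nonneg (pow_nonneg hx 6) (pow_nonneg hs 5), mul_nonneg (pow_nonneg hx 6) (pow_nonneg hs 6)]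
end
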